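/- arXiv:1011.4133 — 5 statements merged into one kernel-verified Lean document; each statement's English description precedes it below -/
import Mathlib

section
/- Let k be a field, let A be a unital associative k-algebra, and let e ∈ A be an idempotent such that the corner ring eAe = {eae : a ∈ A} is locally finite over k, i.e., every finite subset of eAe generates a finite-dimensional (not necessarily unital) k-subalgebra. Then the two-sided ideal AeA generated by e is locally finite over k: every finite subset of AeA generates a finite-dimensional (not necessarily unital) k-subalgebra. -/
/-- If `e` is an idempotent of a unital `k`-algebra `A` whose corner
`eAe = {eae : a ∈ A}` is locally finite over `k`, then the two-sided ideal `AeA`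
generated by `e` is locally finite over `k`: every finite subset of it generates a
finite-dimensional (not necessarily unital) `k`-subalgebra. -/
theorem locallyFinite_ideal_of_locallyFinite_corner
    (k A : Type) [Field k] [Ring A] [Algebra k A]
    (e : A) (he : e * e = e)
    (hcorner : ∀ S : Set A, S.Finite → S ⊆ {x : A | ∃ a : A, x = e * a * e} →
      Module.Finite k ↥(NonUnitalAlgebra.adjoin k S)) :
    ∀ S : Set A, S.Finite → S ⊆ (TwoSidedIdeal.span {e} : Set A) →
      Module.Finite k ↥(NonUnitalAlgebra.adjoin k S) := by
  classical
  intro S hSfin hSsub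
  set P : Set A := {x : A | ∃ a b : A, x = a * e * b} with hPdef
  -- left/right multiplicative stability of span k P
  have hleft : ∀ x y : A, y ∈ Submodule.span k P → x * y ∈ Submodule.span k P := by
    intro x y hy
    induction hy using Submodule.span_induction with
    | mem z hz =>
      obtain ⟨a, b, rfl⟩ := hz
      exact Submodule.subset_span ⟨x * a, b, by simp [mul_assoc]⟩
    | zero => simp
    | add u v _ _ hu hv => rw [mul_add]; exact add_mem hu hv
    | smul r u _ hu => rw [mul_smul_comm]; exact Submodule.smul_mem _ _ hu
  have hright : ∀ x y : A, x ∈ Submodule.span k P → x * y ∈ Submodule.span k P := by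
    intro x y hx
    induction hx using Submodule.span_induction with
    | mem z hz =>
      obtain ⟨a, b, rfl⟩ := hz
      exact Submodule.subset_span ⟨a, b * y, by simp [mul_assoc]⟩
    | zero => simp
    | add u v _ _ hu hv => rw [add_mul]; exact add_mem hu hv
    | smul r u _ hu => rw [smul_mul_assoc]; exact Submodule.smul_mem _ _ hu
  -- every element of S lies in span k P
  have hSP : ∀ s ∈ S, s ∈ Submodule.span k P := by
    intro s hs
    have hmem : s ∈ TwoSidedIdeal.span {e} := hSsub hs
    have := TwoSidedIdeal.mem_span_iff.mp hmem
      (TwoSidedIdeal.mk' (Submodule.span k P) (Submodule.zero_mem _)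
        (fun hx hy => add_mem hx hy) (fun hx => neg_mem hx)
        (fun {x y} hy => hleft x y hy) (fun {x y} hx => hright x y hx))
      (by
        intro x hx
        rw [Set.mem_singleton_iff] at hx
        subst hx
        rw [SetLike.mem_coe, TwoSidedIdeal.mem_mk']
        exact Submodule.subset_span ⟨1, 1, by simp⟩)
    rwa [TwoSidedIdeal.mem_mk'] at this
  -- a finite subset F of P with S ⊆ span k F
  have hex : ∀ s : A, ∃ T : Finset A, s ∈ S → ↑T ⊆ P ∧ s ∈ Submodule.span k (↑T : Set A) := by
    intro s
    by_cases hs : s ∈ S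
    · obtain ⟨T, hT1, hT2⟩ := Submodule.mem_span_finite_of_mem_span (hSP s hs)
      exact ⟨T, fun _ => ⟨hT1, hT2⟩⟩
    · exact ⟨∅, fun h => absurd h hs⟩
  choose Fs hFs using hex
  set F : Finset A := hSfin.toFinset.biUnion Fs with hFdef
  have hFP : (↑F : Set A) ⊆ P := by
    intro x hx
    simp only [hFdef, Finset.coe_biUnion, Set.mem_iUnion, Finset.mem_coe,
      Set.Finite.mem_toFinset] at hx
    obtain ⟨s, hs, hx⟩ := hx
    exact (hFs s hs).1 hx
  have hSF : ∀ s ∈ S, s ∈ Submodule.span k (↑F : Set A) := by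
    intro s hs
    refine Submodule.span_mono ?_ ((hFs s hs).2)
    intro x hx
    simp only [hFdef, Finset.coe_biUnion, Set.mem_iUnion, Finset.mem_coe,
      Set.Finite.mem_toFinset]
    exact ⟨s, hs, hx⟩
  -- choose decompositions p = α p * e * β p for p ∈ F
  have hex2 : ∀ p : A, ∃ a b : A, p ∈ F → p = a * e * b := by
    intro p
    by_cases hp : p ∈ F
    · obtain ⟨a, b, hab⟩ := hFP hp
      exact ⟨a, b, fun _ => hab⟩
    · exact ⟨0, 0, fun h => absurd h hp⟩
  choose α β hαβ using hex2
  -- the corner generators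
  set T : Set A := Set.image2 (fun p q => e * (β p * α q) * e) (↑F : Set A) (↑F : Set A)
    with hTdef
  have hTfin : T.Finite := Set.Finite.image2 _ F.finite_toSet F.finite_toSet
  have hTcorner : T ⊆ {x : A | ∃ a : A, x = e * a * e} := by
    rintro x ⟨p, hp, q, hq, rfl⟩
    exact ⟨β p * α q, rfl⟩
  set B : NonUnitalSubalgebra k A := NonUnitalAlgebra.adjoin k T with hBdef
  have hBfin : Module.Finite k ↥B := hcorner T hTfin hTcorner
  -- absorption: elements of B absorb e on both sides
  have habs : ∀ x ∈ B, e * x = x ∧ x * e = x := by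
    intro x hx
    induction hx using NonUnitalAlgebra.adjoin_induction with
    | mem z hz =>
      obtain ⟨p, hp, q, hq, rfl⟩ := hz
      constructor
      · calc e * (e * (β p * α q) * e) = (e * e) * (β p * α q) * e := by
              simp [mul_assoc]
        _ = e * (β p * α q) * e := by rw [he]
      · calc (e * (β p * α q) * e) * e = e * (β p * α q) * (e * e) := by
              simp [mul_assoc]
        _ = e * (β p * α q) * e := by rw [he]
    | add u v _ _ hu hv =>
      exact ⟨by rw [mul_add, hu.1, hv.1], by rw [add_mul, hu.2, hv.2]⟩
    | zero => simp
    | mul u v _ _ hu hv =>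
      exact ⟨by rw [← mul_assoc, hu.1], by rw [mul_assoc, hv.2]⟩
    | smul r u _ hu =>
      exact ⟨by rw [mul_smul_comm, hu.1], by rw [smul_mul_assoc, hu.2]⟩
  -- a finite generating set G of B as a k-module
  have hfg : B.toSubmodule.FG := by
    rw [Submodule.fg_iff_finiteDimensional]
    exact hBfin
  obtain ⟨G, hG⟩ := hfg
  have hGB : (↑G : Set A) ⊆ (B : Set A) := by
    intro c hc
    have : c ∈ B.toSubmodule := hG ▸ Submodule.subset_span hc
    exact this
  -- the finite set U = { α p * c * β q }
  set U : Set A := (fun x : A × A × A => α x.1 * x.2.1 * β x.2.2) ''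
    ((↑F : Set A) ×ˢ ((↑G : Set A) ×ˢ (↑F : Set A))) with hUdef
  have hUfin : U.Finite :=
    ((F.finite_toSet.prod (G.finite_toSet.prod F.finite_toSet)).image _)
  set MU : Submodule k A := Submodule.span k U with hMUdef
  set MF : Submodule k A := Submodule.span k (↑F : Set A) with hMFdef
  -- sandwiching a B-element between α p and β q lands in MU
  have hU : ∀ p ∈ F, ∀ q ∈ F, ∀ x ∈ B, α p * x * β q ∈ MU := by
    intro p hp q hq x hx
    have hx' : x ∈ Submodule.span k (↑G : Set A) := by rw [hG]; exact hx
    clear hx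
    induction hx' using Submodule.span_induction with
    | mem c hc => exact Submodule.subset_span ⟨⟨p, c, q⟩, ⟨hp, hc, hq⟩, rfl⟩
    | zero => simp
    | add u v _ _ hu' hv' =>
      rw [mul_add, add_mul]
      exact add_mem hu' hv'
    | smul r u _ hu' =>
      rw [mul_smul_comm, smul_mul_assoc]
      exact Submodule.smul_mem _ _ hu'
  have hTB : T ⊆ (B : Set A) := NonUnitalAlgebra.subset_adjoin k
  -- products of generators
  have hmulFF : ∀ p ∈ F, ∀ q ∈ F, p * q ∈ MU := by
    intro p hp q hq
    have ht : e * (β p * α q) * e ∈ B := hTB ⟨p, hp, q, hq, rfl⟩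
    have heq : p * q = α p * (e * (β p * α q) * e) * β q := by
      conv_lhs => rw [hαβ p hp, hαβ q hq]
      simp [mul_assoc]
    rw [heq]
    exact hU p hp q hq _ ht
  have hmulFU : ∀ p ∈ F, ∀ u ∈ U, p * u ∈ MU := by
    intro p hp u hu
    obtain ⟨⟨q, c, r⟩, ⟨hq, hc, hr⟩, rfl⟩ := hu
    have hcB : c ∈ B := hGB hc
    have ht : e * (β p * α q) * e ∈ B := hTB ⟨p, hp, q, hq, rfl⟩
    have heq : p * (α q * c * β r) = α p * ((e * (β p * α q) * e) * c) * β r := by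
      conv_lhs => rw [hαβ p hp, ← (habs c hcB).1]
      simp [mul_assoc]
    rw [heq]
    exact hU p hp r hr _ (mul_mem ht hcB)
  have hmulUF : ∀ u ∈ U, ∀ p ∈ F, u * p ∈ MU := by
    intro u hu p hp
    obtain ⟨⟨q, c, r⟩, ⟨hq, hc, hr⟩, rfl⟩ := hu
    have hcB : c ∈ B := hGB hc
    have ht : e * (β r * α p) * e ∈ B := hTB ⟨r, hr, p, hp, rfl⟩
    have heq : (α q * c * β r) * p = α q * (c * (e * (β r * α p) * e)) * β p := by
      conv_lhs => rw [hαβ p hp, ← (habs c hcB).2]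
      simp [mul_assoc]
    rw [heq]
    exact hU q hq p hp _ (mul_mem hcB ht)
  have hmulUU : ∀ u ∈ U, ∀ v ∈ U, u * v ∈ MU := by
    intro u hu v hv
    obtain ⟨⟨p, c, q⟩, ⟨hp, hc, hq⟩, rfl⟩ := hu
    obtain ⟨⟨r, c', s⟩, ⟨hr, hc', hs⟩, rfl⟩ := hv
    have hcB : c ∈ B := hGB hc
    have hcB' : c' ∈ B := hGB hc'
    have ht : e * (β q * α r) * e ∈ B := hTB ⟨q, hq, r, hr, rfl⟩
    have heq : (α p * c * β q) * (α r * c' * β s)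
        = α p * (c * (e * (β q * α r) * e) * c') * β s := by
      conv_lhs => rw [← (habs c hcB).2, ← (habs c' hcB').1]
      simp [mul_assoc]
    rw [heq]
    exact hU p hp s hs _ (mul_mem (mul_mem hcB ht) hcB')
  -- the four span-level product containments
  have hFmulF : MF * MF ≤ MU := by
    rw [hMFdef, Submodule.span_mul_span, Submodule.span_le]
    rintro x ⟨p, hp, q, hq, rfl⟩
    exact hmulFF p hp q hq
  have hFmulU : MF * MU ≤ MU := by
    rw [hMFdef, hMUdef, Submodule.span_mul_span, Submodule.span_le]
    rintro x ⟨p, hp, u, hu, rfl⟩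
    exact hmulFU p hp u hu
  have hUmulF : MU * MF ≤ MU := by
    rw [hMFdef, hMUdef, Submodule.span_mul_span, Submodule.span_le]
    rintro x ⟨u, hu, p, hp, rfl⟩
    exact hmulUF u hu p hp
  have hUmulU : MU * MU ≤ MU := by
    rw [hMUdef, Submodule.span_mul_span, Submodule.span_le]
    rintro x ⟨u, hu, v, hv, rfl⟩
    exact hmulUU u hu v hv
  set M : Submodule k A := Submodule.span k S ⊔ MU with hMdef
  have hSle : Submodule.span k S ≤ MF := Submodule.span_le.2 (fun s hs => hSF s hs)
  have hMle : M ≤ MF ⊔ MU := sup_le_sup_right hSle _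
  have hclosed : ∀ x ∈ M, ∀ y ∈ M, x * y ∈ M := by
    intro x hx y hy
    have hmem : x * y ∈ (MF ⊔ MU) * (MF ⊔ MU) :=
      Submodule.mul_mem_mul (hMle hx) (hMle hy)
    have hle : (MF ⊔ MU) * (MF ⊔ MU) ≤ MU := by
      rw [Submodule.sup_mul, Submodule.mul_sup, Submodule.mul_sup]
      exact sup_le (sup_le hFmulF hFmulU) (sup_le hUmulF hUmulU)
    exact Submodule.mem_sup_right (hle hmem)
  haveI h1 : FiniteDimensional k (Submodule.span k S) :=
    FiniteDimensional.span_of_finite k hSfin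
  haveI h2 : FiniteDimensional k MU := FiniteDimensional.span_of_finite k hUfin
  haveI hMfin : FiniteDimensional k M := inferInstance
  have hadj : NonUnitalAlgebra.adjoin k S ≤
      M.toNonUnitalSubalgebra (fun x y hx hy => hclosed x hx y hy) :=
    NonUnitalAlgebra.adjoin_le
      (fun s hs => Submodule.mem_sup_left (Submodule.subset_span hs))
  have hle2 : (NonUnitalAlgebra.adjoin k S).toSubmodule ≤ M := fun x hx => hadj hx
  have hfin := Submodule.finiteDimensional_of_le (S₂ := M) hle2
  exact hfin
end

section
/- Let k be a field, let A be a unital associative k-algebra, and let I be a two-sided ideal of A that is locally finite over k, i.e., every finite subset of I generates a finite-dimensional (not necessarily unital) k-subalgebra. If the quotient algebra A/I is algebraic over k, then A is algebraic over k. -/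
/-- If a two-sided ideal `I` of a unital `k`-algebra `A` is locally finite over `k`
and the quotient `A/I` is algebraic over `k`, then `A` is algebraic over `k`. -/
theorem algebraic_of_locallyFinite_ideal_and_algebraic_quotient
    (k A : Type) [Field k] [Ring A] [Algebra k A]
    (I : TwoSidedIdeal A)
    (hLF : ∀ S : Set A, S.Finite → S ⊆ (I : Set A) →
      Module.Finite k ↥(NonUnitalAlgebra.adjoin k S))
    (hquot : ∀ q : I.ringCon.Quotient, IsAlgebraic k q) :
    ∀ a : A, IsAlgebraic k a := by
  intro a
  let φ : A →ₐ[k] I.ringCon.Quotient :=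
    { I.ringCon.mk' with commutes' := fun r => rfl }
  obtain ⟨p, hp0, hp⟩ := hquot (φ a)
  set p' : Polynomial k := p * Polynomial.X with hp'def
  have hp'0 : p' ≠ 0 := mul_ne_zero hp0 Polynomial.X_ne_zero
  have hdeg : 0 < p'.natDegree := by
    rw [hp'def, Polynomial.natDegree_mul hp0 Polynomial.X_ne_zero]
    simp
  set b := Polynomial.aeval a p' with hbdef
  have hφb : φ b = 0 := by
    rw [hbdef, ← Polynomial.aeval_algHom_apply, hp'def]
    simp [hp]
  have hbI : b ∈ I := by
    rw [TwoSidedIdeal.mem_iff]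
    have : (b : I.ringCon.Quotient) = ((0 : A) : I.ringCon.Quotient) := by
      exact hφb
    exact I.ringCon.eq.mp this
  set N := NonUnitalAlgebra.adjoin k ({b} : Set A) with hNdef
  have hNfin : Module.Finite k ↥N :=
    hLF {b} (Set.finite_singleton b) (by simpa using hbI)
  have hUfin : Module.Finite k (Unitization k ↥N) := by
    have : Module.Finite k (k × ↥N) := inferInstance
    exact Module.Finite.equiv (Unitization.linearEquiv k k ↥N).symm
  set B := Algebra.adjoin k ((N : Set A)) with hBdef
  have hrange : (NonUnitalSubalgebra.unitization N).range = B :=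
    NonUnitalSubalgebra.unitization_range N
  have hsub : Subalgebra.toSubmodule B =
      LinearMap.range (NonUnitalSubalgebra.unitization N).toLinearMap := by
    rw [← hrange]
    rfl
  have hFG : (Subalgebra.toSubmodule B).FG := by
    rw [hsub]
    exact Module.Finite.iff_fg.mp (Module.Finite.range _)
  have hbB : b ∈ B := Algebra.subset_adjoin (NonUnitalAlgebra.self_mem_adjoin_singleton k b)
  have hbint : IsIntegral k b := IsIntegral.of_mem_of_fg B hFG b hbB
  obtain ⟨r, hr0, hr⟩ := hbint.isAlgebraic
  refine ⟨r.comp p', ?_, ?_⟩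
  · rw [Ne, Polynomial.comp_eq_zero_iff]
    rintro (h | ⟨-, h⟩)
    · exact hr0 h
    · rw [h] at hdeg
      simp [Polynomial.natDegree_C] at hdeg
  · rw [Polynomial.aeval_comp, ← hbdef, hr]
end

section
/- Let k be a field and let A be a (not necessarily unital) associative k-algebra that is generated as a k-algebra by finitely many elements, is infinite-dimensional as a k-vector space, and in which every element is nilpotent. Then there exists a two-sided ideal P of A such that the quotient A/P is a nonzero prime ring and is infinite-dimensional as a k-vector space. -/
set_option linter.unusedSectionVars false
set_option linter.unusedVariables false
set_option linter.unnecessarySimpa false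

/-- `nupow a n = a ^ (n + 1)`, powers in a not necessarily unital ring. -/
def nupow {A : Type} [NonUnitalRing A] (a : A) : ℕ → A
  | 0 => a
  | n + 1 => nupow a n * a

/-- An element of a not necessarily unital ring is nilpotent if some positive power
of it vanishes. -/
def IsNilElem {A : Type} [NonUnitalRing A] (a : A) : Prop :=
  ∃ n : ℕ, nupow a n = 0

section Aux

open Submodule

variable (k A : Type) [Field k] [NonUnitalRing A] [Module k A]
  [SMulCommClass k A A] [IsScalarTower k A A]

/-- Product of two submodules of a non-unital algebra. -/
def mulS (M N : Submodule k A) : Submodule k A :=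
  span k (Set.image2 (· * ·) (M : Set A) (N : Set A))

variable {k A}

lemma mem_mulS {M N : Submodule k A} {x y : A} (hx : x ∈ M) (hy : y ∈ N) :
    x * y ∈ mulS k A M N :=
  subset_span ⟨x, hx, y, hy, rfl⟩

lemma mulS_le {M N P : Submodule k A} (h : ∀ x ∈ M, ∀ y ∈ N, x * y ∈ P) :
    mulS k A M N ≤ P :=
  span_le.2 (by rintro _ ⟨x, hx, y, hy, rfl⟩; exact h x hx y hy)

lemma mulS_mono {M N M' N' : Submodule k A} (h1 : M ≤ M') (h2 : N ≤ N') :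
    mulS k A M N ≤ mulS k A M' N' :=
  mulS_le fun x hx y hy => mem_mulS (h1 hx) (h2 hy)

/-- Generic right-multiplication stability for spans. -/
lemma mul_right_span {S : Set A} {P : Submodule k A}
    (h : ∀ z ∈ S, ∀ a : A, z * a ∈ P) {x : A} (hx : x ∈ span k S) (a : A) :
    x * a ∈ P := by
  induction hx using span_induction with
  | mem z hz => exact h z hz a
  | zero => simpa using P.zero_mem
  | add x y _ _ hx hy => rw [add_mul]; exact P.add_mem hx hy
  | smul c x _ hx => rw [smul_mul_assoc]; exact P.smul_mem c hx

/-- Generic left-multiplication stability for spans. -/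
lemma mul_left_span {S : Set A} {P : Submodule k A}
    (h : ∀ z ∈ S, ∀ a : A, a * z ∈ P) {x : A} (hx : x ∈ span k S) (a : A) :
    a * x ∈ P := by
  induction hx using span_induction with
  | mem z hz => exact h z hz a
  | zero => simpa using P.zero_mem
  | add x y _ _ hx hy => rw [mul_add]; exact P.add_mem hx hy
  | smul c x _ hx => rw [mul_smul_comm]; exact P.smul_mem c hx

lemma mulS_assoc_le {M N P : Submodule k A} :
    mulS k A (mulS k A M N) P ≤ mulS k A M (mulS k A N P) := by
  refine mulS_le fun x hx z hz => ?_
  induction hx using span_induction with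
  | mem w hw =>
      obtain ⟨u, hu, v, hv, rfl⟩ := hw
      rw [mul_assoc]
      exact mem_mulS hu (mem_mulS hv hz)
  | zero => simpa using Submodule.zero_mem _
  | add x y _ _ hx hy => rw [add_mul]; exact Submodule.add_mem _ hx hy
  | smul c x _ hx => rw [smul_mul_assoc]; exact Submodule.smul_mem _ c hx

variable (k A)

/-- span of products of `n+1` elements of `A`. -/
def NN : ℕ → Submodule k A
  | 0 => ⊤
  | n + 1 => mulS k A (NN n) ⊤

variable {k A}

lemma NN_right (n : ℕ) : ∀ x ∈ NN k A n, ∀ a : A, x * a ∈ NN k A n := by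
  induction n with
  | zero => exact fun x _ a => mem_top
  | succ n ih =>
      intro x hx a
      refine mul_right_span (S := Set.image2 (· * ·) ((NN k A n : Submodule k A) : Set A)
        ((⊤ : Submodule k A) : Set A)) ?_ hx a
      rintro _ ⟨u, hu, v, hv, rfl⟩ b
      rw [mul_assoc]
      exact mem_mulS hu mem_top

lemma NN_succ_le (n : ℕ) : NN k A (n + 1) ≤ NN k A n :=
  mulS_le fun x hx y _ => NN_right n x hx y

lemma NN_antitone {m n : ℕ} (h : m ≤ n) : NN k A n ≤ NN k A m := by
  induction n with
  | zero => exact (by omega : m = 0) ▸ le_rfl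
  | succ n ih =>
      rcases Nat.eq_or_lt_of_le h with rfl | h'
      · exact le_rfl
      · exact (NN_succ_le n).trans (ih (by omega))

lemma NN_left (n : ℕ) : ∀ a : A, ∀ x ∈ NN k A n, a * x ∈ NN k A (n + 1) := by
  induction n with
  | zero => exact fun a x _ => mem_mulS mem_top mem_top
  | succ n ih =>
      intro a x hx
      refine mul_left_span (S := Set.image2 (· * ·) ((NN k A n : Submodule k A) : Set A)
        ((⊤ : Submodule k A) : Set A)) ?_ hx a
      rintro _ ⟨u, hu, v, hv, rfl⟩ b
      rw [← mul_assoc]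
      exact mem_mulS (ih b u hu) mem_top

lemma NN_add (a : ℕ) : ∀ b, NN k A (a + b + 1) ≤ mulS k A (NN k A a) (NN k A b) := by
  intro b
  induction b with
  | zero => exact le_rfl
  | succ b ih =>
      have h1 : NN k A (a + (b+1) + 1) = mulS k A (NN k A (a + b + 1)) ⊤ := by
        have : a + (b+1) + 1 = (a + b + 1) + 1 := by omega
        rw [this]; rfl
      rw [h1]
      exact le_trans (mulS_mono ih le_rfl) mulS_assoc_le

end Aux

section Aux2

open Submodule Pointwise

variable {k A : Type} [Field k] [NonUnitalRing A] [Module k A]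
  [SMulCommClass k A A] [IsScalarTower k A A]

variable (k A) in
/-- right-ideal-submodule span of a set. -/
def RI (X : Set A) : Submodule k A :=
  span k (X ∪ {z | ∃ x ∈ X, ∃ a : A, z = x * a})

lemma RI_mul {X : Set A} {x : A} (hx : x ∈ RI k A X) (a : A) : x * a ∈ RI k A X := by
  refine mul_right_span ?_ hx a
  rintro z (hz | ⟨x', hx', b, rfl⟩) c
  · exact subset_span (Or.inr ⟨z, hz, c, rfl⟩)
  · exact subset_span (Or.inr ⟨x', hx', b * c, by rw [mul_assoc]⟩)

lemma RI_le {X : Set A} {Q : Submodule k A} (h1 : X ⊆ Q)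
    (h2 : ∀ x ∈ Q, ∀ a : A, x * a ∈ Q) : RI k A X ≤ Q := by
  refine span_le.2 ?_
  rintro z (hz | ⟨x', hx', b, rfl⟩)
  · exact h1 hz
  · exact h2 x' (h1 hx') b

section WithGen

variable [DecidableEq A] (s : Finset A)

/-- monomials of length `n+1` in the generators. -/
def GG : ℕ → Finset A
  | 0 => s
  | n + 1 => GG n * s

variable {s}

lemma mem_span_closure (hs : NonUnitalAlgebra.adjoin k (s : Set A) = ⊤) (x : A) :
    x ∈ span k (Subsemigroup.closure (s : Set A) : Set A) := by
  have hx : x ∈ (NonUnitalAlgebra.adjoin k (s : Set A)).toSubmodule := by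
    rw [hs]; trivial
  rwa [NonUnitalAlgebra.adjoin_eq_span] at hx

lemma top_le_RI (hs : NonUnitalAlgebra.adjoin k (s : Set A) = ⊤) (x : A) :
    x ∈ RI k A (s : Set A) := by
  have hx := mem_span_closure hs x
  refine span_le.2 ?_ hx
  intro w hw
  induction hw using Subsemigroup.closure_induction with
  | mem c hc => exact subset_span (Or.inl hc)
  | mul u v hu hv pu pv => exact RI_mul pu v

lemma claimLg (hs : NonUnitalAlgebra.adjoin k (s : Set A) = ⊤) (n : ℕ) :
    ∀ g ∈ GG s n, ∀ y : A, g * y ∈ RI k A ((GG s (n + 1) : Finset A) : Set A) := by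
  intro g hg y
  have hy := mem_span_closure hs y
  induction hy using span_induction with
  | mem w hw =>
      induction hw using Subsemigroup.closure_induction with
      | mem c hc =>
          exact subset_span (Or.inl (Finset.mem_coe.2 (Finset.mul_mem_mul hg hc)))
      | mul u v hu hv pu pv =>
          rw [← mul_assoc]; exact RI_mul pu v
  | zero => rw [mul_zero]; exact Submodule.zero_mem _
  | add u v _ _ pu pv => rw [mul_add]; exact Submodule.add_mem _ pu pv
  | smul c u _ pu => rw [mul_smul_comm]; exact Submodule.smul_mem _ c pu

lemma claimA (hs : NonUnitalAlgebra.adjoin k (s : Set A) = ⊤) :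
    ∀ n, NN k A n ≤ RI k A ((GG s n : Finset A) : Set A) := by
  intro n
  induction n with
  | zero => intro x _; exact top_le_RI hs x
  | succ n ih =>
      refine mulS_le fun x hx y _ => ?_
      have hx' : x ∈ RI k A ((GG s n : Finset A) : Set A) := ih hx
      refine mul_right_span ?_ hx' y
      rintro z (hz | ⟨g, hg, a, rfl⟩) c
      · exact claimLg hs n z hz c
      · rw [mul_assoc]; exact claimLg hs n g hg (a * c)

lemma claimB : ∀ n, ∀ g ∈ GG s n, g ∈ NN k A n := by
  intro n
  induction n with
  | zero => intro g _; trivial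
  | succ n ih =>
      intro g hg
      obtain ⟨u, hu, c, hc, rfl⟩ := Finset.mem_mul.1 hg
      exact mem_mulS (ih u hu) mem_top

lemma claimE (hs : NonUnitalAlgebra.adjoin k (s : Set A) = ⊤) (n : ℕ) :
    NN k A n ≤ span k ((GG s n : Finset A) : Set A) ⊔ NN k A (n + 1) := by
  refine le_trans (claimA hs n) (span_le.2 ?_)
  rintro z (hz | ⟨g, hg, a, rfl⟩)
  · exact mem_sup_left (subset_span hz)
  · exact mem_sup_right (mem_mulS (claimB n g hg) mem_top)

lemma top_le_span_sup (hs : NonUnitalAlgebra.adjoin k (s : Set A) = ⊤) :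
    ∀ n, (⊤ : Submodule k A) ≤
      span k (((Finset.range n).biUnion (GG s) : Finset A) : Set A) ⊔ NN k A n := by
  intro n
  induction n with
  | zero => exact le_sup_right
  | succ n ih =>
      refine le_trans ih ?_
      refine sup_le ?_ ?_
      · refine le_trans (le_sup_left (b := NN k A (n+1))) ?_
        refine sup_le_sup_right (span_mono ?_) _
        intro g hg
        rcases Finset.mem_biUnion.1 hg with ⟨i, hi, hgi⟩
        exact Finset.mem_coe.2 (Finset.mem_biUnion.2 ⟨i, Finset.mem_range.2
          (lt_trans (Finset.mem_range.1 hi) (Nat.lt_succ_self n)), hgi⟩)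
      · refine le_trans (claimE hs n) (sup_le ?_ le_sup_right)
        refine le_trans (le_sup_left (b := NN k A (n+1))) ?_
        refine sup_le_sup_right (span_mono ?_) _
        intro g hg
        exact Finset.mem_coe.2 (Finset.mem_biUnion.2 ⟨n, Finset.mem_range.2
          (Nat.lt_succ_self n), hg⟩)

end WithGen

/-- property of being a two-sided-ideal submodule. -/
def IsIdl (Q : Submodule k A) : Prop :=
  (∀ x ∈ Q, ∀ a : A, x * a ∈ Q) ∧ (∀ x ∈ Q, ∀ a : A, a * x ∈ Q)

variable (k A) in
/-- two-sided-ideal-submodule span of an element. -/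
def TIS (x : A) : Submodule k A :=
  span k ({x} ∪ {z | ∃ a, z = x * a} ∪ {z | ∃ a, z = a * x} ∪ {z | ∃ a b, z = a * (x * b)})

lemma TIS_mem (x : A) : x ∈ TIS k A x :=
  subset_span (Or.inl (Or.inl (Or.inl rfl)))

lemma TIS_isIdl (x : A) : IsIdl (TIS k A x) := by
  constructor
  · intro u hu a
    refine mul_right_span ?_ hu a
    rintro z (((hz | ⟨b, rfl⟩) | ⟨b, rfl⟩) | ⟨b, c, rfl⟩) d
    · rcases hz with rfl
      exact subset_span (Or.inl (Or.inl (Or.inr ⟨d, rfl⟩)))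
    · exact subset_span (Or.inl (Or.inl (Or.inr ⟨b * d, by rw [mul_assoc]⟩)))
    · exact subset_span (Or.inr ⟨b, d, by rw [mul_assoc]⟩)
    · exact subset_span (Or.inr ⟨b, c * d, by rw [mul_assoc, mul_assoc]⟩)
  · intro u hu a
    refine mul_left_span ?_ hu a
    rintro z (((hz | ⟨b, rfl⟩) | ⟨b, rfl⟩) | ⟨b, c, rfl⟩) d
    · rcases hz with rfl
      exact subset_span (Or.inl (Or.inr ⟨d, rfl⟩))
    · exact subset_span (Or.inr ⟨d, b, rfl⟩)
    · exact subset_span (Or.inl (Or.inr ⟨d * b, by rw [mul_assoc]⟩))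
    · exact subset_span (Or.inr ⟨d * b, c, by rw [mul_assoc]⟩)

lemma IsIdl_sup {Q T : Submodule k A} (hQ : IsIdl Q) (hT : IsIdl T) : IsIdl (Q ⊔ T) := by
  constructor
  · intro u hu a
    rcases mem_sup.1 hu with ⟨q, hq, t, ht, rfl⟩
    rw [add_mul]
    exact add_mem (mem_sup_left (hQ.1 q hq a)) (mem_sup_right (hT.1 t ht a))
  · intro u hu a
    rcases mem_sup.1 hu with ⟨q, hq, t, ht, rfl⟩
    rw [mul_add]
    exact add_mem (mem_sup_left (hQ.2 q hq a)) (mem_sup_right (hT.2 t ht a))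

lemma IsIdl_bot : IsIdl (⊥ : Submodule k A) := by
  constructor <;> intro x hx a <;> rw [Submodule.mem_bot] at hx ⊢ <;> subst hx
  · rw [zero_mul]
  · rw [mul_zero]

lemma exists_quasi {x : A} (hx : IsNilElem x) : ∃ y : A, x + y = y * x := by
  obtain ⟨n, hn⟩ := hx
  refine ⟨-(∑ i ∈ Finset.range (n + 1), nupow x i), ?_⟩
  have hmul : (∑ i ∈ Finset.range (n + 1), nupow x i) * x
      = ∑ i ∈ Finset.range (n + 1), nupow x (i + 1) := by
    rw [Finset.sum_mul]
    exact Finset.sum_congr rfl fun i _ => rfl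
  have h2 : ∑ i ∈ Finset.range (n + 1), nupow x (i + 1)
      = ∑ i ∈ Finset.range n, nupow x (i + 1) := by
    rw [Finset.sum_range_succ, show nupow x (n + 1) = nupow x n * x from rfl, hn, zero_mul,
      add_zero]
  have h3 : ∑ i ∈ Finset.range (n + 1), nupow x i
      = (∑ i ∈ Finset.range n, nupow x (i + 1)) + x := by
    rw [Finset.sum_range_succ']
    rfl
  rw [neg_mul, hmul, h2, h3]
  abel

lemma chain_finset {c : Set (Submodule k A)} (hc : IsChain (· ≤ ·) c) {y : Submodule k A}
    (hy : y ∈ c) (t : Finset A) (ht : ∀ g ∈ t, ∃ Q ∈ c, g ∈ Q) :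
    ∃ Q ∈ c, ∀ g ∈ t, g ∈ Q := by
  classical
  induction t using Finset.induction_on with
  | empty => exact ⟨y, hy, by simp⟩
  | insert _ _ ha ih =>
      rename_i a t'
      obtain ⟨Q, hQ, hQt⟩ := ih fun g hg => ht g (Finset.mem_insert_of_mem hg)
      obtain ⟨Q', hQ', hgQ'⟩ := ht a (Finset.mem_insert_self a t')
      rcases eq_or_ne Q Q' with rfl | hne
      · exact ⟨Q, hQ, fun g hg => by
          rcases Finset.mem_insert.1 hg with rfl | hg
          exacts [hgQ', hQt g hg]⟩
      rcases hc hQ hQ' hne with h | h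
      · exact ⟨Q', hQ', fun g hg => by
          rcases Finset.mem_insert.1 hg with rfl | hg
          exacts [hgQ', h (hQt g hg)]⟩
      · exact ⟨Q, hQ, fun g hg => by
          rcases Finset.mem_insert.1 hg with rfl | hg
          exacts [h hgQ', hQt g hg]⟩

end Aux2

section Aux3

open Submodule

variable {k A : Type} [Field k] [NonUnitalRing A] [Module k A]
  [SMulCommClass k A A] [IsScalarTower k A A]

variable (k) in
/-- `{x * u | x ∈ W, u ∈ X}` -/
def Wmul (W : Submodule k A) (X : Set A) : Set A :=
  {z | ∃ u ∈ X, ∃ x ∈ (W : Set A), z = x * u}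

lemma Wmul_left {W : Submodule k A} (hWl : ∀ a : A, ∀ x ∈ W, a * x ∈ W) {X : Set A}
    (a : A) {z : A} (hz : z ∈ span k (Wmul k W X)) : a * z ∈ span k (Wmul k W X) := by
  refine mul_left_span ?_ hz a
  rintro _ ⟨u, hu, x, hx, rfl⟩ b
  rw [← mul_assoc]
  exact subset_span ⟨u, hu, b * x, hWl b x hx, rfl⟩

lemma FF_mulW {W : Submodule k A} (hWl : ∀ a : A, ∀ x ∈ W, a * x ∈ W) {X : Set A}
    {x : A} (hx : x ∈ W) {z : A} (hz : z ∈ span k (X ∪ Wmul k W X)) :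
    x * z ∈ span k (Wmul k W X) := by
  induction hz using span_induction with
  | mem z' hz' =>
      rcases hz' with hz' | ⟨u, hu, x', hx', rfl⟩
      · exact subset_span ⟨z', hz', x, hx, rfl⟩
      · rw [← mul_assoc]
        exact subset_span ⟨u, hu, x * x', hWl x x' hx', rfl⟩
  | zero => rw [mul_zero]; exact Submodule.zero_mem _
  | add u v _ _ pu pv => rw [mul_add]; exact Submodule.add_mem _ pu pv
  | smul c u _ pu => rw [mul_smul_comm]; exact Submodule.smul_mem _ c pu

lemma span_Wmul_singleton {W : Submodule k A} {w₀ : A} {z : A}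
    (hz : z ∈ span k (Wmul k W {w₀})) : ∃ x ∈ W, z = x * w₀ := by
  induction hz using span_induction with
  | mem z' hz' =>
      obtain ⟨u, hu, x, hx, rfl⟩ := hz'
      rcases hu with rfl
      exact ⟨x, hx, rfl⟩
  | zero => exact ⟨0, zero_mem _, (zero_mul w₀).symm⟩
  | add u v _ _ pu pv =>
      obtain ⟨x1, hx1, rfl⟩ := pu
      obtain ⟨x2, hx2, rfl⟩ := pv
      exact ⟨x1 + x2, add_mem hx1 hx2, (add_mul x1 x2 w₀).symm⟩
  | smul c u _ pu =>
      obtain ⟨x1, hx1, rfl⟩ := pu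
      exact ⟨c • x1, smul_mem _ c hx1, (smul_mul_assoc c x1 w₀).symm⟩

lemma nakayama {Q W : Submodule k A}
    (hQidl : IsIdl Q) (hQW : Q ≤ W)
    (hWl : ∀ a : A, ∀ x ∈ W, a * x ∈ W)
    (hW2 : W ≤ Q ⊔ mulS k A W W)
    (hnil : ∀ a : A, IsNilElem a) :
    ∀ t : Finset A, (t : Set A) ⊆ (W : Set A) →
      W ≤ Q ⊔ span k ((t : Set A) ∪ Wmul k W (t : Set A)) → W ≤ Q := by
  classical
  intro t
  induction t using Finset.induction_on with
  | empty =>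
      intro _ h
      simpa [Wmul] using h
  | insert _ _ ha ih =>
      rename_i w₀ t'
      intro htW hsub
      have hw₀W : w₀ ∈ W := htW (by simp)
      have ht'W : (t' : Set A) ⊆ (W : Set A) :=
        fun g hg => htW (by simp [hg])
      -- the target ideal-like submodule
      set D : Submodule k A := Q ⊔ span k (Wmul k W (t' : Set A)) with hD
      have hDl : ∀ a : A, ∀ z ∈ D, a * z ∈ D := by
        intro a z hz
        rcases mem_sup.1 hz with ⟨q, hq, u, hu, rfl⟩
        rw [mul_add]
        exact add_mem (mem_sup_left (hQidl.2 q hq a)) (mem_sup_right (Wmul_left hWl a hu))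
      -- decompose the insert-span
      have hsplit : span k ((↑(insert w₀ t') : Set A) ∪ Wmul k W (↑(insert w₀ t') : Set A))
          ≤ (span k ({w₀} ∪ Wmul k W {w₀}) ⊔ span k ((t' : Set A) ∪ Wmul k W (t' : Set A))) := by
        refine span_le.2 ?_
        rintro z (hz | ⟨u, hu, x, hx, rfl⟩)
        · rw [Finset.coe_insert] at hz
          rcases hz with rfl | hz
          · exact mem_sup_left (subset_span (Or.inl rfl))
          · exact mem_sup_right (subset_span (Or.inl hz))
        · rw [Finset.coe_insert] at hu
          rcases hu with rfl | hu
          · exact mem_sup_left (subset_span (Or.inr ⟨u, rfl, x, hx, rfl⟩))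
          · exact mem_sup_right (subset_span (Or.inr ⟨u, hu, x, hx, rfl⟩))
      -- products of two elements of W land in Q ⊔ span (Wmul (insert w₀ t'))
      have hWW : mulS k A W W ≤ Q ⊔ span k (Wmul k W (↑(insert w₀ t') : Set A)) := by
        refine mulS_le fun x hx y hy => ?_
        rcases mem_sup.1 (hsub hy) with ⟨q, hq, f, hf, rfl⟩
        rw [mul_add]
        exact add_mem (mem_sup_left (hQidl.2 q hq x)) (mem_sup_right (FF_mulW hWl hx hf))
      have hWmins : span k (Wmul k W (↑(insert w₀ t') : Set A))
          ≤ span k (Wmul k W {w₀}) ⊔ span k (Wmul k W (t' : Set A)) := by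
        refine span_le.2 ?_
        rintro _ ⟨u, hu, x, hx, rfl⟩
        rw [Finset.coe_insert] at hu
        rcases hu with rfl | hu
        · exact mem_sup_left (subset_span ⟨u, rfl, x, hx, rfl⟩)
        · exact mem_sup_right (subset_span ⟨u, hu, x, hx, rfl⟩)
      -- get the relation w₀ = g + x * w₀
      have hw₀ : w₀ ∈ D ⊔ span k (Wmul k W {w₀}) := by
        have h1 : w₀ ∈ Q ⊔ mulS k A W W := hW2 hw₀W
        rcases mem_sup.1 h1 with ⟨q, hq, m, hm, hqm⟩
        have h2 : m ∈ Q ⊔ span k (Wmul k W (↑(insert w₀ t') : Set A)) := hWW hm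
        rcases mem_sup.1 h2 with ⟨q', hq', m', hm', hqm'⟩
        have h3 : m' ∈ span k (Wmul k W {w₀}) ⊔ span k (Wmul k W (t' : Set A)) := hWmins hm'
        rcases mem_sup.1 h3 with ⟨z1, hz1, z2, hz2, hz12⟩
        have heq : w₀ = (q + q' + z2) + z1 := by rw [← hqm, ← hqm', ← hz12]; abel
        have hmem : (q + q' + z2) + z1 ∈ D ⊔ span k (Wmul k W {w₀}) :=
          add_mem (mem_sup_left (add_mem (mem_sup_left (add_mem hq hq'))
            (mem_sup_right hz2))) (mem_sup_right hz1)
        rwa [← heq] at hmem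
      rcases mem_sup.1 hw₀ with ⟨g, hg, z, hz, hgz⟩
      obtain ⟨x, hxW, rfl⟩ := span_Wmul_singleton hz
      -- quasi-inverse trick to solve for w₀
      obtain ⟨y, hy⟩ := exists_quasi (hnil x)
      have e1 : w₀ = g + x * w₀ := hgz.symm
      have e2 : y * w₀ = y * g + x * w₀ + y * w₀ := by
        calc y * w₀ = y * (g + x * w₀) := by rw [← e1]
        _ = y * g + (y * x) * w₀ := by rw [mul_add, mul_assoc]
        _ = y * g + (x + y) * w₀ := by rw [← hy]
        _ = y * g + x * w₀ + y * w₀ := by rw [add_mul]; abel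
      have e3 : y * g + x * w₀ = 0 := by
        have := e2
        nth_rewrite 1 [show y * w₀ = 0 + y * w₀ by rw [zero_add]] at this
        exact (add_right_cancel this.symm)
      have e4 : x * w₀ = -(y * g) := by
        rw [eq_neg_iff_add_eq_zero, add_comm]; exact e3
      have hw₀D : w₀ ∈ D := by
        rw [e1, e4]
        exact add_mem hg (neg_mem (hDl y g hg))
      -- now everything lands in Q ⊔ FF t'
      have hWm0 : span k (Wmul k W {w₀}) ≤ D := by
        intro z' hz'
        obtain ⟨x', hx'W, rfl⟩ := span_Wmul_singleton hz'
        exact hDl x' w₀ hw₀D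
      have hfin : W ≤ Q ⊔ span k ((t' : Set A) ∪ Wmul k W (t' : Set A)) := by
        intro w hw
        have h1 : w ∈ Q ⊔ (span k ({w₀} ∪ Wmul k W {w₀})
            ⊔ span k ((t' : Set A) ∪ Wmul k W (t' : Set A))) := by
          rcases mem_sup.1 (hsub hw) with ⟨q, hq, f, hf, rfl⟩
          exact add_mem (mem_sup_left hq) (mem_sup_right (hsplit hf))
        rcases mem_sup.1 h1 with ⟨q, hq, f, hf, rfl⟩
        rcases mem_sup.1 hf with ⟨f1, hf1, f2, hf2, rfl⟩
        have hf1D : f1 ∈ D := by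
          have : span k ({w₀} ∪ Wmul k W {w₀}) ≤ D := by
            refine span_le.2 ?_
            rintro z' (rfl | hz')
            · exact hw₀D
            · exact hWm0 (subset_span hz')
          exact this hf1
        rcases mem_sup.1 hf1D with ⟨q1, hq1, z1, hz1, rfl⟩
        have : q + (q1 + z1 + f2) = (q + q1) + (z1 + f2) := by abel
        rw [this]
        refine add_mem (mem_sup_left (add_mem hq hq1)) (mem_sup_right ?_)
        refine add_mem ?_ hf2
        refine span_mono ?_ hz1
        exact Set.subset_union_right
      exact ih ht'W hfin

end Aux3

section MainResult

open Submodule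

/-- A finitely generated, infinite-dimensional nil (not necessarily unital)
`k`-algebra `A` has a two-sided ideal `P` (also a `k`-subspace `Pm` with the same
elements) such that `A/P` is a nonzero prime ring and is infinite-dimensional over `k`:
`P ≠ ⊤`, the ideal `P` is prime (so the quotient ring `A/P` is prime), and the quotient
vector space `A ⧸ Pm` is infinite-dimensional. -/
theorem exists_prime_infiniteDim_quotient_of_fg_nil
    (k A : Type) [Field k] [NonUnitalRing A] [Module k A]
    [SMulCommClass k A A] [IsScalarTower k A A]
    (hfg : ∃ s : Finset A, NonUnitalAlgebra.adjoin k (s : Set A) = ⊤)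
    (hinf : ¬ Module.Finite k A)
    (hnil : ∀ a : A, IsNilElem a) :
    ∃ (P : TwoSidedIdeal A) (Pm : Submodule k A),
      (Pm : Set A) = (P : Set A) ∧
      P ≠ ⊤ ∧
      (∀ I J : TwoSidedIdeal A, (∀ a ∈ I, ∀ b ∈ J, a * b ∈ P) → I ≤ P ∨ J ≤ P) ∧
      ¬ Module.Finite k (A ⧸ Pm) := by
  classical
  obtain ⟨s, hs⟩ := hfg
  set 𝒮 : Set (Submodule k A) := {Q | IsIdl Q ∧ ∀ n, ¬ NN k A n ≤ Q} with h𝒮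
  have hbot : (⊥ : Submodule k A) ∈ 𝒮 := by
    refine ⟨IsIdl_bot, fun n hn => hinf ?_⟩
    have h1 : (⊤ : Submodule k A) ≤
        span k (((Finset.range n).biUnion (GG s) : Finset A) : Set A) ⊔ (⊥ : Submodule k A) :=
      le_trans (top_le_span_sup hs n) (sup_le_sup_left hn _)
    rw [sup_bot_eq] at h1
    exact ⟨⟨(Finset.range n).biUnion (GG s), le_antisymm le_top h1⟩⟩
  have hchain : ∀ c ⊆ 𝒮, IsChain (· ≤ ·) c → ∀ y ∈ c, ∃ ub ∈ 𝒮, ∀ z ∈ c, z ≤ ub := by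
    intro c hc𝒮 hcchain y hy
    refine ⟨sSup c, ⟨⟨?_, ?_⟩, ?_⟩, fun z hz => le_sSup hz⟩
    · intro x hx a
      obtain ⟨R, hR, hxR⟩ := (mem_sSup_of_directed ⟨y, hy⟩ hcchain.directedOn).1 hx
      exact le_sSup hR ((hc𝒮 hR).1.1 x hxR a)
    · intro x hx a
      obtain ⟨R, hR, hxR⟩ := (mem_sSup_of_directed ⟨y, hy⟩ hcchain.directedOn).1 hx
      exact le_sSup hR ((hc𝒮 hR).1.2 x hxR a)
    · intro n hn
      have hG : ∀ g ∈ GG s n, ∃ R ∈ c, g ∈ R := fun g hg =>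
        (mem_sSup_of_directed ⟨y, hy⟩ hcchain.directedOn).1 (hn (claimB n g hg))
      obtain ⟨R, hRc, hRall⟩ := chain_finset hcchain hy (GG s n) hG
      have hle : NN k A n ≤ R :=
        le_trans (claimA hs n)
          (RI_le (fun g hg => hRall g (Finset.mem_coe.1 hg)) (hc𝒮 hRc).1.1)
      exact (hc𝒮 hRc).2 n hle
  obtain ⟨Q, -, hQmax⟩ := zorn_le_nonempty₀ 𝒮 hchain ⊥ hbot
  obtain ⟨hQidl, hQC⟩ := hQmax.prop
  set P : TwoSidedIdeal A := TwoSidedIdeal.mk' (Q : Set A) Q.zero_mem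
    (fun hx hy => Q.add_mem hx hy) (fun hx => Q.neg_mem hx)
    (fun {x y} hy => hQidl.2 y hy x) (fun {x y} hx => hQidl.1 x hx y) with hPdef
  have hPmem : ∀ z : A, z ∈ P ↔ z ∈ Q := by
    intro z
    rw [hPdef, TwoSidedIdeal.mem_mk']
    exact Iff.rfl
  refine ⟨P, Q, ?_, ?_, ?_, ?_⟩
  · ext z
    rw [SetLike.mem_coe, SetLike.mem_coe, hPmem z]
  · intro hP
    refine hQC 0 fun x _ => ?_
    have hx : x ∈ P := by rw [hP]; exact TwoSidedIdeal.mem_top A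
    exact (hPmem x).1 hx
  · intro I J hIJ
    by_contra hcon
    push_neg at hcon
    obtain ⟨hI, hJ⟩ := hcon
    obtain ⟨a₀, ha₀I, ha₀P⟩ := SetLike.not_le_iff_exists.1 hI
    obtain ⟨b₀, hb₀J, hb₀P⟩ := SetLike.not_le_iff_exists.1 hJ
    have ha₀Q : a₀ ∉ Q := fun h => ha₀P ((hPmem a₀).2 h)
    have hb₀Q : b₀ ∉ Q := fun h => hb₀P ((hPmem b₀).2 h)
    have hbig : ∀ x₀ : A, x₀ ∉ Q → ∃ m, NN k A m ≤ Q ⊔ TIS k A x₀ := by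
      intro x₀ hx₀
      by_contra hnone
      push_neg at hnone
      have hmem𝒮 : Q ⊔ TIS k A x₀ ∈ 𝒮 := ⟨IsIdl_sup hQidl (TIS_isIdl x₀), hnone⟩
      have hle : Q ⊔ TIS k A x₀ ≤ Q := hQmax.2 hmem𝒮 le_sup_left
      exact hx₀ (hle (Submodule.mem_sup_right (TIS_mem x₀)))
    obtain ⟨m, hm⟩ := hbig a₀ ha₀Q
    obtain ⟨m', hm'⟩ := hbig b₀ hb₀Q
    have hL1 : ∀ u ∈ TIS k A a₀, ∀ b' ∈ J, u * b' ∈ Q := by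
      intro u hu b' hb'
      induction hu using span_induction with
      | mem z hz =>
          rcases hz with ((hz | ⟨c, rfl⟩) | ⟨c, rfl⟩) | ⟨c, d, rfl⟩
          · rw [show z = a₀ from hz]
            exact (hPmem _).1 (hIJ a₀ ha₀I b' hb')
          · rw [mul_assoc]
            exact (hPmem _).1 (hIJ a₀ ha₀I (c * b') (J.mul_mem_left _ _ hb'))
          · rw [mul_assoc]
            exact hQidl.2 _ ((hPmem _).1 (hIJ a₀ ha₀I b' hb')) c
          · rw [mul_assoc]
            refine hQidl.2 _ ?_ c
            rw [mul_assoc]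
            exact (hPmem _).1 (hIJ a₀ ha₀I (d * b') (J.mul_mem_left _ _ hb'))
      | zero => rw [zero_mul]; exact Q.zero_mem
      | add u v _ _ pu pv => rw [add_mul]; exact Q.add_mem pu pv
      | smul c u _ pu => rw [smul_mul_assoc]; exact Q.smul_mem c pu
    have hTT : ∀ u ∈ TIS k A a₀, ∀ v ∈ TIS k A b₀, u * v ∈ Q := by
      intro u hu v hv
      induction hv using span_induction with
      | mem z hz =>
          rcases hz with ((hz | ⟨c, rfl⟩) | ⟨c, rfl⟩) | ⟨c, d, rfl⟩
          · rw [show z = b₀ from hz]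
            exact hL1 u hu b₀ hb₀J
          · rw [← mul_assoc]
            exact hQidl.1 _ (hL1 u hu b₀ hb₀J) c
          · rw [← mul_assoc]
            exact hL1 (u * c) ((TIS_isIdl a₀).1 u hu c) b₀ hb₀J
          · rw [← mul_assoc, ← mul_assoc]
            exact hQidl.1 _ (hL1 (u * c) ((TIS_isIdl a₀).1 u hu c) b₀ hb₀J) d
      | zero => rw [mul_zero]; exact Q.zero_mem
      | add z w _ _ pz pw => rw [mul_add]; exact Q.add_mem pz pw
      | smul c z _ pz => rw [mul_smul_comm]; exact Q.smul_mem c pz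
    have hQ12 : mulS k A (Q ⊔ TIS k A a₀) (Q ⊔ TIS k A b₀) ≤ Q := by
      refine mulS_le fun x hx y hy => ?_
      rcases mem_sup.1 hx with ⟨q, hq, u, hu, hqu⟩
      rcases mem_sup.1 hy with ⟨q', hq', v, hv, hqv⟩
      rw [← hqu, ← hqv, add_mul, mul_add, mul_add]
      exact add_mem (add_mem (hQidl.1 q hq q') (hQidl.1 q hq v))
        (add_mem (hQidl.2 q' hq' u) (hTT u hu v hv))
    exact hQC (m + m' + 1)
      (le_trans (NN_add m m') (le_trans (mulS_mono hm hm') hQ12))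
  · intro hfin
    haveI := hfin
    have hanti : ∀ i j : ℕ, i ≤ j → map Q.mkQ (NN k A j) ≤ map Q.mkQ (NN k A i) :=
      fun i j hij => Submodule.map_mono (NN_antitone hij)
    let f : ℕ →o (Submodule k (A ⧸ Q))ᵒᵈ :=
      ⟨fun n => map Q.mkQ (NN k A n), fun i j hij => hanti i j hij⟩
    obtain ⟨n, hstab⟩ := IsArtinian.monotone_stabilizes f
    have hsup : ∀ m0, n ≤ m0 → Q ⊔ NN k A m0 = Q ⊔ NN k A n := by
      intro m0 hm0
      have h1 : map Q.mkQ (NN k A n) = map Q.mkQ (NN k A m0) := hstab m0 hm0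
      have h2 := congrArg (comap Q.mkQ) h1
      rw [comap_map_eq, comap_map_eq, Submodule.ker_mkQ] at h2
      rw [sup_comm Q (NN k A m0), sup_comm Q (NN k A n)]
      exact h2.symm
    set W : Submodule k A := Q ⊔ NN k A n with hWdef
    have hQW : Q ≤ W := le_sup_left
    have hWl : ∀ a : A, ∀ x ∈ W, a * x ∈ W := by
      intro a x hx
      rcases mem_sup.1 hx with ⟨q, hq, z, hz, hqz⟩
      rw [← hqz, mul_add]
      exact add_mem (mem_sup_left (hQidl.2 q hq a))
        (mem_sup_right (NN_succ_le n (NN_left n a z hz)))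
    have hW2 : W ≤ Q ⊔ mulS k A W W := by
      have h1 : W = Q ⊔ NN k A (n + n + 1) := (hsup (n + n + 1) (by omega)).symm
      exact le_trans (le_of_eq h1)
        (sup_le_sup_left (le_trans (NN_add n n) (mulS_mono le_sup_right le_sup_right)) Q)
    have hfg2 : (map Q.mkQ W).FG := IsNoetherian.noetherian _
    obtain ⟨T, hT⟩ := hfg2
    have hlift : ∀ z ∈ T, ∃ w, w ∈ W ∧ Q.mkQ w = z := by
      intro z hz
      have hzm : z ∈ map Q.mkQ W := by
        rw [← hT]; exact subset_span hz
      obtain ⟨w, hw, hwz⟩ := mem_map.1 hzm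
      exact ⟨w, hw, hwz⟩
    choose g hgW hgz using hlift
    set t : Finset A := T.attach.image (fun z => g z.1 z.2) with htdef
    have htW : (t : Set A) ⊆ (W : Set A) := by
      intro x hx
      obtain ⟨⟨z, hzT⟩, -, rfl⟩ := Finset.mem_image.1 (Finset.mem_coe.1 hx)
      exact hgW z hzT
    have hWt : W ≤ Q ⊔ span k (t : Set A) := by
      intro x hx
      have h1 : Q.mkQ x ∈ span k (T : Set (A ⧸ Q)) := by
        rw [hT]; exact mem_map_of_mem hx
      have hTt : (T : Set (A ⧸ Q)) ⊆ Q.mkQ '' (t : Set A) := by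
        intro z hz
        have hzT := Finset.mem_coe.1 hz
        exact ⟨g z hzT, Finset.mem_coe.2 (Finset.mem_image.2
          ⟨⟨z, hzT⟩, Finset.mem_attach _ _, rfl⟩), hgz z hzT⟩
      have h2 : Q.mkQ x ∈ map Q.mkQ (span k (t : Set A)) := by
        rw [← Submodule.span_image]
        exact span_mono hTt h1
      have h3 : x ∈ comap Q.mkQ (map Q.mkQ (span k (t : Set A))) := mem_comap.2 h2
      rw [comap_map_eq, Submodule.ker_mkQ] at h3
      rwa [sup_comm] at h3
    have ht2 : W ≤ Q ⊔ span k ((t : Set A) ∪ Wmul k W (t : Set A)) :=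
      le_trans hWt (sup_le_sup_left (span_mono Set.subset_union_left) Q)
    have hWQ : W ≤ Q := nakayama hQidl hQW hWl hW2 hnil t htW ht2
    exact hQC n (le_trans le_sup_right hWQ)

end MainResult
end

section
/- Let S be an associative ring, let e ∈ S be an idempotent, and let P be a proper ideal of the corner ring eSe = {ese : s ∈ S} (a ring with identity e) that is prime in eSe, i.e., for all ideals I, J of eSe, IJ ⊆ P implies I ⊆ P or J ⊆ P. Suppose Q is a two-sided ideal of S that is maximal among two-sided ideals X of S satisfying eXe = P, where eXe = {exe : x ∈ X}. Then Q is a prime ideal of S: Q is proper and for all two-sided ideals I, J of S, IJ ⊆ Q implies I ⊆ Q or J ⊆ Q. -/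
def cornerSubring (S : Type) [Ring S] (e : S) (he : e * e = e) : NonUnitalSubring S where
  carrier := {x | e * x * e = x}
  zero_mem' := by simp
  add_mem' := by
    intro a b ha hb
    simp only [Set.mem_setOf_eq] at *
    rw [mul_add, add_mul, ha, hb]
  neg_mem' := by
    intro a ha
    simp only [Set.mem_setOf_eq] at *
    rw [mul_neg, neg_mul, ha]
  mul_mem' := by
    intro a b ha hb
    simp only [Set.mem_setOf_eq] at *
    have ea : e * a = a := by
      conv_lhs => rw [← ha]
      rw [← mul_assoc, ← mul_assoc, he]
      exact ha
    have be : b * e = b := by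
      conv_lhs => rw [← hb]
      rw [mul_assoc, he]
      exact hb
    rw [← mul_assoc, ea, mul_assoc, be]

section aux
variable (S : Type) [Ring S] (e : S) (he : e * e = e)

/-- sum of two two-sided ideals as a two-sided ideal -/
def sumIdeal (Q I : TwoSidedIdeal S) : TwoSidedIdeal S :=
  TwoSidedIdeal.mk' {x | ∃ q ∈ Q, ∃ i ∈ I, x = q + i}
    ⟨0, Q.zero_mem, 0, I.zero_mem, by simp⟩
    (by rintro x y ⟨q, hq, i, hi, rfl⟩ ⟨q', hq', i', hi', rfl⟩
        exact ⟨q + q', Q.add_mem hq hq', i + i', I.add_mem hi hi', by abel⟩)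
    (by rintro x ⟨q, hq, i, hi, rfl⟩
        exact ⟨-q, Q.neg_mem hq, -i, I.neg_mem hi, by abel⟩)
    (by rintro x y ⟨q, hq, i, hi, rfl⟩
        exact ⟨x * q, Q.mul_mem_left _ _ hq, x * i, I.mul_mem_left _ _ hi, by rw [mul_add]⟩)
    (by rintro x y ⟨q, hq, i, hi, rfl⟩
        exact ⟨q * y, Q.mul_mem_right _ _ hq, i * y, I.mul_mem_right _ _ hi, by rw [add_mul]⟩)

lemma mem_sumIdeal (Q I : TwoSidedIdeal S) (x : S) :
    x ∈ sumIdeal S Q I ↔ ∃ q ∈ Q, ∃ i ∈ I, x = q + i :=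
  TwoSidedIdeal.mem_mk' _ _ _ _ _ _ _

/-- comap of a two-sided ideal of `S` to the corner ring -/
def cornerIdeal (X : TwoSidedIdeal S) : TwoSidedIdeal ↥(cornerSubring S e he) :=
  TwoSidedIdeal.mk' {a | (a : S) ∈ X}
    X.zero_mem
    (fun hx hy => X.add_mem hx hy)
    (fun hx => X.neg_mem hx)
    (fun {x y} hy => X.mul_mem_left _ _ hy)
    (fun {x y} hx => X.mul_mem_right _ _ hx)

lemma mem_cornerIdeal (X : TwoSidedIdeal S) (a : ↥(cornerSubring S e he)) :
    a ∈ cornerIdeal S e he X ↔ (a : S) ∈ X :=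
  TwoSidedIdeal.mem_mk' _ _ _ _ _ _ _

end aux

/-- If `e` is an idempotent of a ring `S`, `P` is a proper prime ideal of the corner
ring `eSe`, and `Q` is a two-sided ideal of `S` maximal among two-sided ideals `X`
with `eXe = P`, then `Q` is a prime ideal of `S`. -/
theorem prime_of_maximal_with_corner_eq_prime
    (S : Type) [Ring S] (e : S) (he : e * e = e)
    (P : TwoSidedIdeal ↥(cornerSubring S e he))
    (hPproper : P ≠ ⊤)
    (hPprime : ∀ I J : TwoSidedIdeal ↥(cornerSubring S e he),
      (∀ a ∈ I, ∀ b ∈ J, a * b ∈ P) → I ≤ P ∨ J ≤ P)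
    (Q : TwoSidedIdeal S)
    (hQ : (fun x => e * x * e) '' (Q : Set S) =
      Subtype.val '' (P : Set ↥(cornerSubring S e he)))
    (hQmax : ∀ X : TwoSidedIdeal S,
      (fun x => e * x * e) '' (X : Set S) =
        Subtype.val '' (P : Set ↥(cornerSubring S e he)) → Q ≤ X → X = Q) :
    Q ≠ ⊤ ∧ ∀ I J : TwoSidedIdeal S, (∀ a ∈ I, ∀ b ∈ J, a * b ∈ Q) → I ≤ Q ∨ J ≤ Q := by
  -- basic facts
  have hmemP : ∀ a : ↥(cornerSubring S e he), a ∈ P → (a : S) ∈ Q := by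
    intro a ha
    have : (a : S) ∈ Subtype.val '' (P : Set ↥(cornerSubring S e he)) :=
      ⟨a, ha, rfl⟩
    rw [← hQ] at this
    obtain ⟨x, hx, hxe⟩ := this
    have hxe' : e * x * e = (a : S) := hxe
    have : e * x * e ∈ Q := Q.mul_mem_right _ _ (Q.mul_mem_left _ _ hx)
    rwa [hxe'] at this
  have hmemQ : ∀ a : ↥(cornerSubring S e he), (a : S) ∈ Q → a ∈ P := by
    intro a ha
    have himg : e * (a : S) * e ∈ (fun x => e * x * e) '' (Q : Set S) := ⟨a, ha, rfl⟩
    rw [hQ] at himg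
    obtain ⟨p, hp, hpe⟩ := himg
    have hae : e * (a : S) * e = (a : S) := a.2
    have : p = a := Subtype.ext (by rw [hpe, hae])
    rwa [this] at hp
  constructor
  · intro hQtop
    apply hPproper
    rw [eq_top_iff]
    intro a _
    exact hmemQ a (by rw [hQtop]; trivial)
  · intro I J hIJ
    by_contra hcon
    push_neg at hcon
    obtain ⟨hInle, hJnle⟩ := hcon
    set A := cornerIdeal S e he (sumIdeal S Q I) with hA
    set B := cornerIdeal S e he (sumIdeal S Q J) with hB
    -- product condition
    have hABP : ∀ a ∈ A, ∀ b ∈ B, a * b ∈ P := by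
      intro a ha b hb
      rw [mem_cornerIdeal, mem_sumIdeal] at ha hb
      obtain ⟨q, hq, i, hi, hai⟩ := ha
      obtain ⟨q', hq', j, hj, hbj⟩ := hb
      apply hmemQ
      have : ((a * b : ↥(cornerSubring S e he)) : S) = (q + i) * (q' + j) := by
        push_cast [hai, hbj]; rfl
      rw [this]
      have h1 : (q + i) * (q' + j) = q * (q' + j) + (i * q' + i * j) := by noncomm_ring
      rw [h1]
      exact Q.add_mem (Q.mul_mem_right _ _ hq)
        (Q.add_mem (Q.mul_mem_left _ _ hq') (hIJ _ hi _ hj))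
    -- a corner-comap of an ideal ≥ Q that maps into P gives ideal = Q
    have key : ∀ I' : TwoSidedIdeal S, (∀ x ∈ I', x ∉ Q → False) → True := fun _ _ => trivial
    have collapse : ∀ X : TwoSidedIdeal S, Q ≤ X →
        cornerIdeal S e he X ≤ P → X = Q := by
      intro X hQX hXP
      apply hQmax
      · ext y
        constructor
        · rintro ⟨x, hx, rfl⟩
          have hc : e * x * e ∈ cornerSubring S e he := by
            show e * (e * x * e) * e = e * x * e
            rw [← mul_assoc, ← mul_assoc, he, mul_assoc, mul_assoc, he, ← mul_assoc]
          refine ⟨⟨e * x * e, hc⟩, ?_, rfl⟩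
          apply hXP
          rw [mem_cornerIdeal]
          exact X.mul_mem_right _ _ (X.mul_mem_left _ _ hx)
        · rintro ⟨p, hp, rfl⟩
          refine ⟨(p : S), hQX (hmemP p hp), ?_⟩
          exact p.2
      · exact hQX
    have hQle : ∀ K : TwoSidedIdeal S, Q ≤ sumIdeal S Q K := by
      intro K x hx
      rw [mem_sumIdeal]
      exact ⟨x, hx, 0, K.zero_mem, by abel⟩
    have hKle : ∀ K : TwoSidedIdeal S, K ≤ sumIdeal S Q K := by
      intro K x hx
      rw [mem_sumIdeal]
      exact ⟨0, Q.zero_mem, x, hx, by abel⟩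
    rcases hPprime A B hABP with h | h
    · exact hInle fun x hx => (collapse _ (hQle I) h) ▸ hKle I hx
    · exact hJnle fun x hx => (collapse _ (hQle J) h) ▸ hKle J hx
end

section
/- Let S be an associative ring, let e ∈ S be an idempotent, and let P be an ideal of the corner ring eSe = {ese : s ∈ S}. If Q and Q′ are two-sided ideals of S each maximal among two-sided ideals X of S satisfying eXe = P, where eXe = {exe : x ∈ X}, then Q = Q′. -/
/-- If `e` is an idempotent of a ring `S` and `P` is an ideal of the corner ring
`eSe`, then a two-sided ideal of `S` maximal among two-sided ideals `X` with
`eXe = P` is unique. -/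
theorem unique_maximal_with_corner_eq
    (S : Type) [Ring S] (e : S) (he : e * e = e)
    (P : TwoSidedIdeal ↥(cornerSubring S e he))
    (Q Q' : TwoSidedIdeal S)
    (hQ : (fun x => e * x * e) '' (Q : Set S) =
      Subtype.val '' (P : Set ↥(cornerSubring S e he)))
    (hQmax : ∀ X : TwoSidedIdeal S,
      (fun x => e * x * e) '' (X : Set S) =
        Subtype.val '' (P : Set ↥(cornerSubring S e he)) → Q ≤ X → X = Q)
    (hQ' : (fun x => e * x * e) '' (Q' : Set S) =
      Subtype.val '' (P : Set ↥(cornerSubring S e he)))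
    (hQ'max : ∀ X : TwoSidedIdeal S,
      (fun x => e * x * e) '' (X : Set S) =
        Subtype.val '' (P : Set ↥(cornerSubring S e he)) → Q' ≤ X → X = Q') :
    Q = Q' := by
  have hadd : ∀ a b : S, a ∈ Subtype.val '' (P : Set ↥(cornerSubring S e he)) →
      b ∈ Subtype.val '' (P : Set ↥(cornerSubring S e he)) →
      a + b ∈ Subtype.val '' (P : Set ↥(cornerSubring S e he)) := by
    rintro _ _ ⟨a, ha, rfl⟩ ⟨b, hb, rfl⟩
    exact ⟨a + b, P.add_mem ha hb, rfl⟩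
  have key : (fun x => e * x * e) '' ((Q ⊔ Q' : TwoSidedIdeal S) : Set S) =
      Subtype.val '' (P : Set ↥(cornerSubring S e he)) := by
    apply Set.Subset.antisymm
    · rintro _ ⟨x, hx, rfl⟩
      obtain ⟨y, hy, z, hz, rfl⟩ := TwoSidedIdeal.mem_sup.1 hx
      have h1 : e * y * e ∈ Subtype.val '' (P : Set ↥(cornerSubring S e he)) := by
        rw [← hQ]; exact ⟨y, hy, rfl⟩
      have h2 : e * z * e ∈ Subtype.val '' (P : Set ↥(cornerSubring S e he)) := by
        rw [← hQ']; exact ⟨z, hz, rfl⟩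
      show e * (y + z) * e ∈ _
      have h3 : e * (y + z) * e = e * y * e + e * z * e := by
        rw [mul_add, add_mul]
      rw [h3]
      exact hadd _ _ h1 h2
    · rw [← hQ]
      exact Set.image_mono (show (Q : Set S) ⊆ _ from (le_sup_left : Q ≤ Q ⊔ Q'))
  have h1 := hQmax (Q ⊔ Q') key le_sup_left
  have h2 := hQ'max (Q ⊔ Q') key le_sup_right
  exact h1.symm.trans h2
end
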